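/- For every theory Σ and all finite subsets A, B of T_Y: B ⊆ A_Σ^ω if and only if Σ ⊢ A ⇒ B. -/

import Mathlib

namespace TAI

variable {Y : Type*}

/-- Time shift of a set of time-annotated attributes: `M + j`. -/
def shiftS (M : Set (Y × ℤ)) (j : ℤ) : Set (Y × ℤ) :=
  (fun p : Y × ℤ => (p.1, p.2 + j)) '' M

/-- Time shift of a finite set of time-annotated attributes: `A + j`. -/
def shiftF [DecidableEq Y] (A : Finset (Y × ℤ)) (j : ℤ) : Finset (Y × ℤ) :=
  A.image (fun p => (p.1, p.2 + j))

/-- An attribute implication over `Y` annotated by time points: a pair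
`(A, B)` of finite subsets of `T_Y = Y × ℤ`, read as `A ⇒ B`. -/
abbrev Fml (Y : Type*) := Finset (Y × ℤ) × Finset (Y × ℤ)

/-- `A ⇒ B` is true in `M ⊆ T_Y`: for every `i ∈ ℤ`, `A + i ⊆ M` implies `B + i ⊆ M`. -/
def Holds [DecidableEq Y] (M : Set (Y × ℤ)) (φ : Fml Y) : Prop :=
  ∀ i : ℤ, ↑(shiftF φ.1 i) ⊆ M → ↑(shiftF φ.2 i) ⊆ M

/-- The models of a theory `T`. -/
def Mods [DecidableEq Y] (T : Set (Fml Y)) : Set (Set (Y × ℤ)) :=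
  {M | ∀ φ ∈ T, Holds M φ}

/-- Semantic entailment: `T ⊨ φ`. -/
def Entails [DecidableEq Y] (T : Set (Fml Y)) (φ : Fml Y) : Prop :=
  ∀ M ∈ Mods T, Holds M φ

/-- Semantic closure `[M]_Σ`. -/
def semClos [DecidableEq Y] (T : Set (Fml Y)) (M : Set (Y × ℤ)) : Set (Y × ℤ) :=
  ⋂₀ {N | N ∈ Mods T ∧ M ⊆ N}

/-- Classical (time-point-free) truth: `M ⊨_PL A ⇒ B` iff `A ⊆ M` implies `B ⊆ M`. -/
def HoldsPL (M : Set (Y × ℤ)) (φ : Fml Y) : Prop :=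
  ↑φ.1 ⊆ M → ↑φ.2 ⊆ M

/-- Classical models. -/
def ModsPL (T : Set (Fml Y)) : Set (Set (Y × ℤ)) :=
  {M | ∀ φ ∈ T, HoldsPL M φ}

/-- Classical semantic entailment `⊨_PL`. -/
def EntailsPL (T : Set (Fml Y)) (φ : Fml Y) : Prop :=
  ∀ M ∈ ModsPL T, HoldsPL M φ

/-- `Σ^PL = {A + i ⇒ B + i | A ⇒ B ∈ Σ, i ∈ ℤ}`. -/
def shiftAll [DecidableEq Y] (T : Set (Fml Y)) : Set (Fml Y) :=
  {ψ | ∃ φ ∈ T, ∃ i : ℤ, ψ = (shiftF φ.1 i, shiftF φ.2 i)}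

/-- One step of the syntactic closure construction. -/
def synStep [DecidableEq Y] (T : Set (Fml Y)) (M : Set (Y × ℤ)) : Set (Y × ℤ) :=
  M ∪ ⋃₀ {S | ∃ φ ∈ T, ∃ i : ℤ, ↑(shiftF φ.1 i) ⊆ M ∧ S = (↑(shiftF φ.2 i) : Set (Y × ℤ))}

/-- `M_Σ^n`. -/
def synIter [DecidableEq Y] (T : Set (Fml Y)) (M : Set (Y × ℤ)) : ℕ → Set (Y × ℤ)
  | 0 => M
  | n + 1 => synStep T (synIter T M n)

/-- The syntactic closure `M_Σ^ω`. -/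
def synClos [DecidableEq Y] (T : Set (Fml Y)) (M : Set (Y × ℤ)) : Set (Y × ℤ) :=
  ⋃ n : ℕ, synIter T M n

/-- Provability from `T` using the rules (Ax), (Cut) and (Shf). -/
inductive Prov [DecidableEq Y] (T : Set (Fml Y)) : Fml Y → Prop
  | hyp {φ : Fml Y} : φ ∈ T → Prov T φ
  | ax (A B : Finset (Y × ℤ)) : Prov T (A ∪ B, A)
  | cut {A B C D : Finset (Y × ℤ)} :
      Prov T (A, B) → Prov T (B ∪ C, D) → Prov T (A ∪ C, D)
  | shf {A B : Finset (Y × ℤ)} (i : ℤ) :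
      Prov T (A, B) → Prov T (shiftF A i, shiftF B i)

/-- Provability from `T` using only the rules (Ax) and (Cut) (no time shifts). -/
inductive ProvAC [DecidableEq Y] (T : Set (Fml Y)) : Fml Y → Prop
  | hyp {φ : Fml Y} : φ ∈ T → ProvAC T φ
  | ax (A B : Finset (Y × ℤ)) : ProvAC T (A ∪ B, A)
  | cut {A B C D : Finset (Y × ℤ)} :
      ProvAC T (A, B) → ProvAC T (B ∪ C, D) → ProvAC T (A ∪ C, D)

/-- Provability from `T` using the rules (Ax) and (Cut_i). -/
inductive ProvCuti [DecidableEq Y] (T : Set (Fml Y)) : Fml Y → Prop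
  | hyp {φ : Fml Y} : φ ∈ T → ProvCuti T φ
  | ax (A B : Finset (Y × ℤ)) : ProvCuti T (A ∪ B, A)
  | cuti {A B C D : Finset (Y × ℤ)} (i : ℤ) :
      ProvCuti T (A, shiftF B i) → ProvCuti T (B ∪ C, D) →
      ProvCuti T (A ∪ shiftF C i, shiftF D i)

/-- Provability from `T` using the rules (Ref) and (Sim_i). -/
inductive ProvRS [DecidableEq Y] (T : Set (Fml Y)) : Fml Y → Prop
  | hyp {φ : Fml Y} : φ ∈ T → ProvRS T φ
  | ref (A : Finset (Y × ℤ)) : ProvRS T (A, A)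
  | simi {A B C D : Finset (Y × ℤ)} (i : ℤ) :
      ProvRS T (A, shiftF B i) → ProvRS T (C, D) →
      ProvRS T (A ∪ shiftF (C \ B) i, shiftF D i)

/-- The closure operator induced by a closure system `S`. -/
def closOp (S : Set (Set (Y × ℤ))) (M : Set (Y × ℤ)) : Set (Y × ℤ) :=
  ⋂₀ {N | N ∈ S ∧ M ⊆ N}

/-- The least time point occurring in a finite set (`0` for the empty set). -/
def lo (A : Finset (Y × ℤ)) : ℤ :=
  (A.image Prod.snd).min.untopD 0

/-- The greatest time point occurring in a finite set (`0` for the empty set). -/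
def hi (A : Finset (Y × ℤ)) : ℤ :=
  (A.image Prod.snd).max.unbotD 0

/-- A formula `A ⇒ B` is predictive if `A ≠ ∅`, `B ≠ ∅`, and every time point in
`A` is less than or equal to every time point in `B`. -/
def Predictive (φ : Fml Y) : Prop :=
  φ.1.Nonempty ∧ φ.2.Nonempty ∧ ∀ p ∈ φ.1, ∀ q ∈ φ.2, p.2 ≤ q.2

section Aux

variable [DecidableEq Y]

lemma shiftF_union (A B : Finset (Y × ℤ)) (i : ℤ) :
    shiftF (A ∪ B) i = shiftF A i ∪ shiftF B i :=
  Finset.image_union _ _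

lemma shiftF_zero (A : Finset (Y × ℤ)) : shiftF A 0 = A := by
  simp [shiftF]

lemma shiftF_shiftF (A : Finset (Y × ℤ)) (j i : ℤ) :
    shiftF (shiftF A j) i = shiftF A (j + i) := by
  unfold shiftF
  rw [Finset.image_image]
  congr 1
  funext p
  simp [add_assoc]

lemma synIter_mono (T : Set (Fml Y)) (M : Set (Y × ℤ)) :
    Monotone (synIter T M) := by
  apply monotone_nat_of_le_succ
  intro n
  exact Set.subset_union_left

lemma synIter_subset_synClos (T : Set (Fml Y)) (M : Set (Y × ℤ)) (n : ℕ) :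
    synIter T M n ⊆ synClos T M :=
  Set.subset_iUnion (synIter T M) n

lemma finset_subset_synIter (T : Set (Fml Y)) (M : Set (Y × ℤ)) (C : Finset (Y × ℤ))
    (h : ↑C ⊆ synClos T M) : ∃ n, ↑C ⊆ synIter T M n := by
  classical
  induction C using Finset.induction_on with
  | empty => exact ⟨0, by simp⟩
  | @insert x C hx ih =>
    obtain ⟨n, hn⟩ := ih (fun y hy => h (by simp [hy]))
    have hxm : x ∈ synClos T M := h (by simp)
    obtain ⟨m, hm⟩ := Set.mem_iUnion.mp hxm
    refine ⟨max n m, ?_⟩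
    intro y hy
    rcases Finset.mem_insert.mp (by exact_mod_cast hy) with rfl | hy'
    · exact synIter_mono T M (le_max_right n m) hm
    · exact synIter_mono T M (le_max_left n m) (hn hy')

/-- weakening -/
lemma Prov.mono {T : Set (Fml Y)} {A B : Finset (Y × ℤ)} (C : Finset (Y × ℤ))
    (h : Prov T (A, B)) : Prov T (A ∪ C, B) := by
  have hax : Prov T (A ∪ C, A) := Prov.ax A C
  have := Prov.cut hax (show Prov T (A ∪ ∅, B) by simpa using h)
  simpa using this

lemma Prov.trans {T : Set (Fml Y)} {A B C : Finset (Y × ℤ)}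
    (h1 : Prov T (A, B)) (h2 : Prov T (B, C)) : Prov T (A, C) := by
  have := Prov.cut h1 (show Prov T (B ∪ ∅, C) by simpa using h2)
  simpa using this

lemma Prov.of_subset {T : Set (Fml Y)} {A B : Finset (Y × ℤ)} (h : B ⊆ A) :
    Prov T (A, B) := by
  have := Prov.ax (T := T) B A
  rwa [Finset.union_eq_right.mpr h] at this

lemma Prov.add {T : Set (Fml Y)} {A B C : Finset (Y × ℤ)}
    (h1 : Prov T (A, B)) (h2 : Prov T (A, C)) : Prov T (A, B ∪ C) := by
  have h2' : Prov T (B ∪ A, C) := by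
    have := h2.mono B
    rwa [Finset.union_comm] at this
  have h3 : Prov T (C ∪ B, B ∪ C) := Prov.of_subset (by rw [Finset.union_comm])
  have h4 : Prov T (B ∪ A ∪ B, B ∪ C) := Prov.cut h2' h3
  have h4' : Prov T (B ∪ A, B ∪ C) := by
    rwa [Finset.union_right_comm, Finset.union_self] at h4
  have h5 : Prov T (A ∪ A, B ∪ C) := Prov.cut h1 h4'
  rwa [Finset.union_self] at h5

/-- Soundness half: everything provable holds in the syntactic closure. -/
lemma holds_synClos {T : Set (Fml Y)} {M : Set (Y × ℤ)} {φ : Fml Y}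
    (h : Prov T φ) : Holds (synClos T M) φ := by
  induction h with
  | hyp hφ =>
    rename_i ψ
    intro i hi
    obtain ⟨n, hn⟩ := finset_subset_synIter T M _ hi
    have : ↑(shiftF ψ.2 i) ⊆ synIter T M (n + 1) := by
      refine Set.subset_union_of_subset_right ?_ _
      exact Set.subset_sUnion_of_mem ⟨ψ, hφ, i, hn, rfl⟩
    exact this.trans (synIter_subset_synClos T M (n + 1))
  | ax A B =>
    intro i hi
    rw [shiftF_union] at hi
    intro y hy
    exact hi (by simpa using Or.inl (by exact_mod_cast hy))
  | cut h1 h2 ih1 ih2 =>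
    rename_i A B C D
    intro i hi
    rw [shiftF_union] at hi
    push_cast at hi
    rw [Set.union_subset_iff] at hi
    have hB := ih1 i hi.1
    apply ih2 i
    rw [shiftF_union]
    push_cast
    exact Set.union_subset hB hi.2
  | shf j h ih =>
    rename_i A B
    intro i hi
    rw [shiftF_shiftF] at hi ⊢
    exact ih (j + i) hi

/-- Completeness half: iterates of the closure are provable. -/
lemma prov_of_subset_synIter {T : Set (Fml Y)} {A : Finset (Y × ℤ)} :
    ∀ (n : ℕ) (C : Finset (Y × ℤ)), ↑C ⊆ synIter T ↑A n → Prov T (A, C) := by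
  intro n
  induction n with
  | zero =>
    intro C hC
    exact Prov.of_subset (by exact_mod_cast hC)
  | succ n ih =>
    intro C hC
    classical
    induction C using Finset.induction_on with
    | empty => simpa using Prov.of_subset (T := T) (A := A) (Finset.empty_subset A)
    | @insert x C hx ihC =>
      have hC' : ↑C ⊆ synIter T (↑A) (n + 1) := fun y hy => hC (by simp [hy])
      have hxmem : x ∈ synIter T (↑A) (n + 1) := hC (by simp)
      have hxprov : Prov T (A, {x}) := by
        rcases hxmem with hx1 | hx2
        · exact ih {x} (by simpa using hx1)
        · obtain ⟨S, ⟨ψ, hψ, i, hprem, rfl⟩, hxS⟩ := hx2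
          have h1 : Prov T (A, shiftF ψ.1 i) := ih _ hprem
          have h2 : Prov T (shiftF ψ.1 i, shiftF ψ.2 i) := by
            have := Prov.shf (T := T) i (Prov.hyp (φ := ψ) hψ)
            simpa using this
          have h3 : Prov T (shiftF ψ.2 i, {x}) :=
            Prov.of_subset (Finset.singleton_subset_iff.mpr (by exact_mod_cast hxS))
          exact (h1.trans h2).trans h3
      have : Prov T (A, {x} ∪ C) := Prov.add hxprov (ihC hC')
      rwa [Finset.insert_eq]

end Aux

/-- `B ⊆ A_Σ^ω` iff `Σ ⊢ A ⇒ B`. -/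
theorem synClos_iff_prov [DecidableEq Y] [Fintype Y] [Nonempty Y]
    (T : Set (Fml Y)) (A B : Finset (Y × ℤ)) :
    ↑B ⊆ synClos T ↑A ↔ Prov T (A, B) := by
  constructor
  · intro h
    obtain ⟨n, hn⟩ := finset_subset_synIter T ↑A B h
    exact prov_of_subset_synIter n B hn
  · intro h
    have hH := holds_synClos (M := (↑A : Set (Y × ℤ))) h
    have hA : ↑(shiftF A 0) ⊆ synClos T (↑A : Set (Y × ℤ)) := by
      rw [shiftF_zero]
      exact synIter_subset_synClos T ↑A 0
    have := hH 0 hA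
    rwa [shiftF_zero] at this

end TAI
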